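/- arXiv:2203.15855 — 5 statements merged into one kernel-verified Lean document; each statement's English description precedes it below -/
import Mathlib

section
/- Let A be a supercommutative ℤ/2-graded ring and let J be the two-sided ideal of A generated by the odd component 𝒜 1. Assume that J is generated as a two-sided ideal by finitely many odd elements, and that J is nilpotent, i.e. there exists n such that every product of n elements of J vanishes. Then A is left Artinian (Artinian as a left module over itself) if and only if the bosonic reduction A/J is an Artinian ring. -/
open Submodule

section BosonicAux

variable {A : Type*} [Ring A]

/-- The quotient by a ring congruence is a module over the base ring. -/
instance ringConQuotientModule (c : RingCon A) : Module A c.Quotient :=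
  { (inferInstance : DistribMulAction A c.Quotient) with
    add_smul := fun a b q => by
      induction q using Quotient.ind'
      rename_i x
      show (((a + b) * x : A) : c.Quotient)
          = ((a * x : A) : c.Quotient) + ((b * x : A) : c.Quotient)
      rw [add_mul, c.coe_add]
    zero_smul := fun q => by
      induction q using Quotient.ind'
      rename_i x
      show (((0 : A) * x : A) : c.Quotient) = 0
      rw [zero_mul, c.coe_zero] }

/-- The quotient map as a linear map. -/
def ringConMkₗ (c : RingCon A) : A →ₗ[A] c.Quotient where
  toFun := fun a => (a : c.Quotient)
  map_add' := fun x y => c.coe_add x y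
  map_smul' := fun a x => rfl

lemma ringConMkₗ_surjective (c : RingCon A) : Function.Surjective (ringConMkₗ c) :=
  fun q => Quotient.inductionOn' q fun x => ⟨x, rfl⟩

/-- An `A`-submodule of the quotient is also a submodule over the quotient ring. -/
def ringConExtendScalars (c : RingCon A) (N : Submodule A c.Quotient) :
    Submodule c.Quotient c.Quotient where
  carrier := N
  add_mem' := fun h1 h2 => N.add_mem h1 h2
  zero_mem' := N.zero_mem
  smul_mem' := fun q x hx => by
    obtain ⟨a, rfl⟩ : ∃ a : A, (a : c.Quotient) = q :=
      Quotient.inductionOn' q fun a => ⟨a, rfl⟩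
    have : (a : c.Quotient) • x = a • x := by
      induction x using Quotient.ind'
      rfl
    rw [this]
    exact N.smul_mem a hx

lemma ringCon_artinian_iff (c : RingCon A) :
    IsArtinian A c.Quotient ↔ IsArtinianRing c.Quotient := by
  constructor
  · intro h
    have hm : StrictMono (fun N : Submodule c.Quotient c.Quotient =>
        N.restrictScalars A) := by
      intro N N' hNN'
      rw [SetLike.lt_iff_le_and_exists] at hNN' ⊢
      exact ⟨fun x hx => hNN'.1 hx, hNN'.2⟩
    exact hm.wellFoundedLT
  · intro h
    have hm : StrictMono (fun N : Submodule A c.Quotient => ringConExtendScalars c N) := by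
      intro N N' hNN'
      rw [SetLike.lt_iff_le_and_exists] at hNN' ⊢
      exact ⟨fun x hx => hNN'.1 hx, hNN'.2⟩
    exact hm.wellFoundedLT

/-- Lift of `a ↦ a • m` to the quotient ring, when `J` kills `m`. -/
def twoSidedLift (J : TwoSidedIdeal A) {M : Type*} [AddCommGroup M] [Module A M]
    (m : M) (hm : ∀ j ∈ J, j • m = 0) : J.ringCon.Quotient →ₗ[A] M where
  toFun := fun q => Quotient.liftOn' q (fun a => a • m) (fun a b hab => by
    have h1 : a - b ∈ J := (J.rel_iff a b).mp hab
    have h0 := hm _ h1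
    rw [sub_smul, sub_eq_zero] at h0
    exact h0)
  map_add' := fun q r => Quotient.inductionOn₂' q r fun a b => by
    show ((a + b) • m) = a • m + b • m
    rw [add_smul]
  map_smul' := fun a q => Quotient.inductionOn' q fun b => by
    show ((a * b) • m) = a • (b • m)
    rw [mul_smul]

/-- A finitely generated module killed by `J`, over a ring whose quotient by `J` is
Artinian (as a module over the base), is Artinian. -/
lemma isArtinian_of_fg_of_killed (J : TwoSidedIdeal A)
    [IsArtinian A J.ringCon.Quotient]
    {M : Type*} [AddCommGroup M] [Module A M] (hfg : (⊤ : Submodule A M).FG)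
    (hkill : ∀ j ∈ J, ∀ m : M, j • m = 0) : IsArtinian A M := by
  classical
  obtain ⟨T, hT⟩ := hfg
  let ψ : T → (J.ringCon.Quotient →ₗ[A] M) := fun t =>
    twoSidedLift J t.1 (fun j hj => hkill j hj t.1)
  let Φ : (T → J.ringCon.Quotient) →ₗ[A] M :=
    { toFun := fun f => ∑ t : T, ψ t (f t)
      map_add' := by
        intro f g
        simp [map_add, Finset.sum_add_distrib]
      map_smul' := by
        intro a f
        simp [map_smul, Finset.smul_sum] }
  have hsurj : Function.Surjective Φ := by
    rw [← LinearMap.range_eq_top]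
    rw [eq_top_iff, ← hT]
    refine Submodule.span_le.mpr ?_
    intro t ht
    refine ⟨(Pi.single (⟨t, ht⟩ : T) (1 : J.ringCon.Quotient) : T → J.ringCon.Quotient), ?_⟩
    have : ∀ t' : T, ψ t' ((Pi.single (⟨t, ht⟩ : T) (1 : J.ringCon.Quotient) : T → J.ringCon.Quotient) t')
        = (Pi.single (⟨t, ht⟩ : T) (ψ (⟨t, ht⟩ : T) 1) : T → M) t' := by
      intro t'
      rcases eq_or_ne t' ⟨t, ht⟩ with h | h
      · subst h; simp
      · simp [Pi.single_eq_of_ne h]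
    show (∑ t' : T, ψ t' ((Pi.single (⟨t, ht⟩ : T) (1 : J.ringCon.Quotient) : T → J.ringCon.Quotient) t')) = t
    rw [Finset.sum_congr rfl (fun t' _ => this t'), Finset.sum_pi_single']
    simp only [Finset.mem_univ, if_true]
    show ψ (⟨t, ht⟩ : T) ((1 : A) : J.ringCon.Quotient) = t
    show (1 : A) • (t : M) = t
    rw [one_smul]
  exact isArtinian_of_surjective _ Φ hsurj

/-- The filtration by powers of the left ideal generated by `s`. -/
def bosonicFiltration (s : Finset A) : ℕ → Submodule A A
  | 0 => ⊤
  | (k + 1) => Submodule.span A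
      {x | ∃ a ∈ (s : Set A), ∃ y ∈ bosonicFiltration s k, x = a * y}

end BosonicAux

/-- A supercommutative `ℤ/2`-graded ring whose odd ideal is finitely generated and nilpotent
is left Artinian iff its bosonic reduction is Artinian. -/
theorem artinianRing_iff_bosonicReduction_artinianRing
    (A : Type*) [Ring A] (𝒜 : ZMod 2 → AddSubgroup A) [GradedRing 𝒜]
    (hsc : ∀ (i j : ZMod 2) (a b : A), a ∈ 𝒜 i → b ∈ 𝒜 j →
      a * b = (-1 : A) ^ (i.val * j.val) * (b * a))
    (J : TwoSidedIdeal A) (hJ : J = TwoSidedIdeal.span (𝒜 1 : Set A))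
    (hfg : ∃ s : Finset A, (s : Set A) ⊆ (𝒜 1 : Set A) ∧
      TwoSidedIdeal.span (s : Set A) = J)
    (hnil : ∃ n : ℕ, ∀ l : List A, l.length = n → (∀ a ∈ l, a ∈ J) → l.prod = 0) :
    IsArtinianRing A ↔ IsArtinianRing J.ringCon.Quotient := by
  classical
  constructor
  · intro hA
    have : IsArtinian A J.ringCon.Quotient :=
      isArtinian_of_surjective A (ringConMkₗ J.ringCon) (ringConMkₗ_surjective J.ringCon)
    exact (ringCon_artinian_iff J.ringCon).mp this
  · intro hQ
    haveI hQ' : IsArtinian A J.ringCon.Quotient := (ringCon_artinian_iff J.ringCon).mpr hQ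
    obtain ⟨s, hs_odd, hs_span⟩ := hfg
    obtain ⟨n, hn⟩ := hnil
    -- odd elements skew-commute with everything
    have hL : ∀ a : A, a ∈ 𝒜 1 → ∀ r : A, ∃ r', a * r = r' * a := by
      intro a ha r
      induction r using DirectSum.Decomposition.inductionOn 𝒜 with
      | zero => exact ⟨0, by rw [mul_zero, zero_mul]⟩
      | @homogeneous i m =>
        refine ⟨(-1 : A) ^ ((1 : ZMod 2).val * i.val) * m, ?_⟩
        rw [hsc 1 i a m ha m.2, mul_assoc]
      | add m m' hm hm' =>
        obtain ⟨r1, h1⟩ := hm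
        obtain ⟨r2, h2⟩ := hm'
        exact ⟨r1 + r2, by rw [mul_add, h1, h2, add_mul]⟩
    have hsJ : ∀ a ∈ s, (a : A) ∈ J := fun a ha => by
      rw [← hs_span]; exact TwoSidedIdeal.subset_span ha
    -- J coincides with the left ideal generated by s
    have hright : ∀ x ∈ Ideal.span (s : Set A), ∀ y : A,
        x * y ∈ Ideal.span (s : Set A) := by
      intro x hx
      induction hx using Submodule.span_induction with
      | mem a ha =>
        intro y
        obtain ⟨r', hr'⟩ := hL a (hs_odd ha) y
        rw [hr']
        exact Ideal.mul_mem_left _ r' (Ideal.subset_span ha)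
      | zero => intro y; rw [zero_mul]; exact zero_mem _
      | add x y _ _ hx hy => intro z; rw [add_mul]; exact add_mem (hx z) (hy z)
      | smul c x _ hx =>
        intro y
        rw [smul_eq_mul, mul_assoc]
        exact Ideal.mul_mem_left _ c (hx y)
    have hJI : ∀ x : A, x ∈ J → x ∈ Ideal.span (s : Set A) := by
      intro x hx
      rw [← hs_span, TwoSidedIdeal.mem_span_iff] at hx
      let I2 : TwoSidedIdeal A := TwoSidedIdeal.mk' (Ideal.span (s : Set A))
        (zero_mem _) (fun h1 h2 => add_mem h1 h2) (fun h => neg_mem h)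
        (fun {x y} h => Ideal.mul_mem_left _ x h)
        (fun {x y} h => hright x h y)
      have := hx I2 (fun a ha => by
        simp only [I2, SetLike.mem_coe, TwoSidedIdeal.mem_mk']
        exact Ideal.subset_span ha)
      simpa only [I2, TwoSidedIdeal.mem_mk', SetLike.mem_coe] using this
    have hIJ : ∀ x : A, x ∈ Ideal.span (s : Set A) → x ∈ J := by
      intro x hx
      induction hx using Submodule.span_induction with
      | mem a ha => exact hsJ a ha
      | zero => exact J.zero_mem
      | add x y _ _ hx hy => exact J.add_mem hx hy
      | smul c x _ hx => exact J.mul_mem_left c x hx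
    -- the filtration
    set F : ℕ → Submodule A A := bosonicFiltration s with hFdef
    have hF0 : F 0 = ⊤ := rfl
    have hFs : ∀ k, F (k + 1)
        = Submodule.span A {x | ∃ a ∈ (s : Set A), ∃ y ∈ F k, x = a * y} := fun k => rfl
    -- antitone
    have hFanti : ∀ k, F (k + 1) ≤ F k := by
      intro k
      induction k with
      | zero => exact le_top
      | succ k ih =>
        rw [hFs (k + 1)]
        refine Submodule.span_le.mpr ?_
        rintro x ⟨a, ha, y, hy, rfl⟩
        rw [hFs k]
        exact Submodule.subset_span ⟨a, ha, y, ih hy, rfl⟩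
    -- J * F k ⊆ F (k+1)
    have hJF : ∀ k, ∀ j ∈ J, ∀ x ∈ F k, j * x ∈ F (k + 1) := by
      intro k j hj
      have hj' := hJI j hj
      clear hj
      induction hj' using Submodule.span_induction with
      | mem a ha =>
        intro x hxk
        exact (hFs k) ▸ Submodule.subset_span ⟨a, ha, x, hxk, rfl⟩
      | zero => intro x hxk; rw [zero_mul]; exact zero_mem _
      | add u v _ _ hu hv =>
        intro x hxk
        rw [add_mul]; exact add_mem (hu x hxk) (hv x hxk)
      | smul c u _ hu =>
        intro x hxk
        rw [smul_eq_mul, mul_assoc]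
        exact Submodule.smul_mem _ c (hu x hxk)
    -- finite generation
    have hFfg : ∀ k, (F k).FG := by
      intro k
      induction k with
      | zero => exact ⟨{1}, by rw [hF0]; simpa using Ideal.span_singleton_one⟩
      | succ k ih =>
        obtain ⟨T, hT⟩ := ih
        refine ⟨Finset.image (fun p : A × A => p.1 * p.2) (s ×ˢ T), ?_⟩
        apply le_antisymm
        · refine Submodule.span_le.mpr ?_
          intro x hx
          simp only [Finset.coe_image, Set.mem_image, Finset.mem_coe,
            Finset.mem_product] at hx
          obtain ⟨⟨a, t⟩, ⟨ha, ht⟩, rfl⟩ := hx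
          rw [hFs k]
          exact Submodule.subset_span ⟨a, ha, t, hT ▸ Submodule.subset_span ht, rfl⟩
        · rw [hFs k]
          refine Submodule.span_le.mpr ?_
          rintro x ⟨a, ha, y, hy, rfl⟩
          rw [← hT] at hy
          induction hy using Submodule.span_induction with
          | mem t ht =>
            apply Submodule.subset_span
            simp only [Finset.coe_image, Set.mem_image, Finset.mem_coe,
              Finset.mem_product]
            exact ⟨(a, t), ⟨ha, ht⟩, rfl⟩
          | zero => rw [mul_zero]; exact zero_mem _
          | add u v _ _ hu hv => rw [mul_add]; exact add_mem hu hv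
          | smul c u _ hu =>
            obtain ⟨c', hc'⟩ := hL a (hs_odd ha) c
            rw [smul_eq_mul, ← mul_assoc, hc', mul_assoc, ← smul_eq_mul]
            exact Submodule.smul_mem _ c' hu
    -- nilpotency of the filtration
    let P : ℕ → Set A := fun k => {x | ∃ l : List A, l.length = k ∧
      (∀ a ∈ l, a ∈ J) ∧ l.prod = x}
    have hmulP : ∀ k, ∀ y ∈ Submodule.span A (P k), ∀ j ∈ J,
        j * y ∈ Submodule.span A (P (k + 1)) := by
      intro k y hy
      induction hy using Submodule.span_induction with
      | mem x hx =>
        intro j hj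
        obtain ⟨l, hlen, hmem, rfl⟩ := hx
        refine Submodule.subset_span ⟨j :: l, by simp [hlen], ?_, by rw [List.prod_cons]⟩
        intro a ha
        rcases List.mem_cons.mp ha with h | h
        · exact h ▸ hj
        · exact hmem a h
      | zero => intro j hj; rw [mul_zero]; exact zero_mem _
      | add u v _ _ hu hv => intro j hj; rw [mul_add]; exact add_mem (hu j hj) (hv j hj)
      | smul c u _ hu =>
        intro j hj
        rw [smul_eq_mul, ← mul_assoc]
        exact hu (j * c) (J.mul_mem_right j c hj)
    have hFP : ∀ k, F k ≤ Submodule.span A (P k) := by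
      intro k
      induction k with
      | zero =>
        intro x _
        have h1 : (1 : A) ∈ P 0 := ⟨[], rfl, by simp, List.prod_nil⟩
        have := Submodule.smul_mem (Submodule.span A (P 0)) x (Submodule.subset_span h1)
        simpa using this
      | succ k ih =>
        rw [hFs k]
        refine Submodule.span_le.mpr ?_
        rintro x ⟨a, ha, y, hy, rfl⟩
        exact hmulP k y (ih hy) a (hsJ a ha)
    have hFn : F n = ⊥ := by
      refine le_bot_iff.mp ?_
      refine le_trans (hFP n) ?_
      refine Submodule.span_le.mpr ?_
      rintro x ⟨l, hlen, hmem, rfl⟩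
      rw [SetLike.mem_coe, Submodule.mem_bot]
      exact hn l hlen hmem
    -- main induction
    have main : ∀ k, IsArtinian A (A ⧸ F k) := by
      intro k
      induction k with
      | zero =>
        haveI : Subsingleton (A ⧸ F 0) := by
          rw [Submodule.Quotient.subsingleton_iff]
          exact hF0
        exact isArtinian_of_finite
      | succ k ih =>
        set S : Submodule A (A ⧸ F (k + 1)) := (F k).map (F (k + 1)).mkQ with hS
        refine (isArtinian_iff_submodule_quotient S).mpr ⟨?_, ?_⟩
        · -- S is Artinian: fg and killed by J
          have hfgS : (⊤ : Submodule A S).FG := by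
            rw [Submodule.fg_top]
            exact Submodule.FG.map _ (hFfg k)
          have hkillS : ∀ j ∈ J, ∀ m : S, j • m = 0 := by
            rintro j hj ⟨x, hx⟩
            obtain ⟨y, hy, rfl⟩ := hx
            have : j • (F (k + 1)).mkQ y = (F (k + 1)).mkQ (j • y) := by
              rw [map_smul]
            apply Subtype.ext
            show j • (F (k + 1)).mkQ y = 0
            rw [this]
            rw [Submodule.mkQ_apply, Submodule.Quotient.mk_eq_zero]
            exact hJF k j hj y hy
          exact isArtinian_of_fg_of_killed J hfgS hkillS
        · -- the quotient is A ⧸ F k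
          have e := Submodule.quotientQuotientEquivQuotient (F (k + 1)) (F k) (hFanti k)
          exact isArtinian_of_linearEquiv e.symm
    have : IsArtinian A (A ⧸ F n) := main n
    exact isArtinian_of_linearEquiv (Submodule.quotEquivOfEqBot (F n) hFn)
end

section
/- Let A be a supercommutative ℤ/2-graded ring with no additive 2-torsion (for all a ∈ A, 2a = 0 implies a = 0). If the two-sided ideal J generated by the odd component 𝒜 1 is generated as a two-sided ideal by n odd elements θ₁, …, θₙ ∈ 𝒜 1, then every product of n+1 elements of J is zero (i.e. J^(n+1) = 0). -/
/-- In a supercommutative `ℤ/2`-graded ring without additive 2-torsion, if the ideal generated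
by the odd part is generated (as a two-sided ideal) by `n` odd elements, then any product of
`n + 1` elements of that ideal vanishes. -/
theorem prod_eq_zero_of_mem_oddIdeal
    (A : Type*) [Ring A] (𝒜 : ZMod 2 → AddSubgroup A) [GradedRing 𝒜]
    (hsc : ∀ (i j : ZMod 2) (a b : A), a ∈ 𝒜 i → b ∈ 𝒜 j →
      a * b = (-1 : A) ^ (i.val * j.val) * (b * a))
    (htf : ∀ a : A, 2 * a = 0 → a = 0)
    (J : TwoSidedIdeal A) (hJ : J = TwoSidedIdeal.span (𝒜 1 : Set A))
    (n : ℕ) (θ : Fin n → A) (hθ : ∀ i, θ i ∈ 𝒜 1)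
    (hgen : TwoSidedIdeal.span (Set.range θ) = J) :
    ∀ l : List A, l.length = n + 1 → (∀ a ∈ l, a ∈ J) → l.prod = 0 := by
  classical
  -- odd elements anticommute
  have hodd : ∀ u v : A, u ∈ 𝒜 1 → v ∈ 𝒜 1 → u * v = -(v * u) := by
    intro u v hu hv
    have h := hsc 1 1 u v hu hv
    have : ((1 : ZMod 2).val * (1 : ZMod 2).val) = 1 := by decide
    rw [this] at h
    simpa using h
  -- odd squares vanish
  have hsq : ∀ u : A, u ∈ 𝒜 1 → u * u = 0 := by
    intro u hu
    apply htf
    have h := hodd u u hu hu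
    rw [two_mul]
    nth_rewrite 1 [h]
    exact neg_add_cancel _
  -- grading involution
  set σ : A → A := fun c => ((DirectSum.decompose 𝒜 c 0 : 𝒜 0) : A)
      - ((DirectSum.decompose 𝒜 c 1 : 𝒜 1) : A) with hσdef
  have hdecomp : ∀ c : A, c = ((DirectSum.decompose 𝒜 c 0 : 𝒜 0) : A)
      + ((DirectSum.decompose 𝒜 c 1 : 𝒜 1) : A) := by
    intro c
    conv_lhs => rw [← DirectSum.sum_support_decompose 𝒜 c]
    rw [Finset.sum_subset (Finset.subset_univ _) (by
      intro i _ h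
      rw [DFinsupp.notMem_support_iff] at h
      simp [h])]
    rw [show (Finset.univ : Finset (ZMod 2)) = {0, 1} by decide]
    rw [Finset.sum_insert (by decide), Finset.sum_singleton]
  have hswap : ∀ (c u : A), u ∈ 𝒜 1 → c * u = u * σ c := by
    intro c u hu
    have h0 : ((DirectSum.decompose 𝒜 c 0 : 𝒜 0) : A) * u
        = u * ((DirectSum.decompose 𝒜 c 0 : 𝒜 0) : A) := by
      have h := hsc 0 1 (((DirectSum.decompose 𝒜 c 0 : 𝒜 0)) : A) u (SetLike.coe_mem _) hu
      simpa using h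
    have h1 : ((DirectSum.decompose 𝒜 c 1 : 𝒜 1) : A) * u
        = -(u * ((DirectSum.decompose 𝒜 c 1 : 𝒜 1) : A)) := by
      have h := hsc 1 1 (((DirectSum.decompose 𝒜 c 1 : 𝒜 1)) : A) u (SetLike.coe_mem _) hu
      have hv : ((1 : ZMod 2).val * (1 : ZMod 2).val) = 1 := by decide
      rw [hv] at h
      simpa using h
    conv_lhs => rw [hdecomp c]
    rw [add_mul, h0, h1, hσdef, mul_sub]
    abel
  -- move a scalar through a product of θ's
  have hswapList : ∀ (s : List (Fin n)) (c : A),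
      c * (s.map θ).prod = (s.map θ).prod * (σ^[s.length] c) := by
    intro s
    induction s with
    | nil => intro c; simp
    | cons j s ih =>
      intro c
      simp only [List.map_cons, List.prod_cons, List.length_cons]
      rw [← mul_assoc, hswap c (θ j) (hθ j), mul_assoc, ih (σ c),
        Function.iterate_succ_apply]
      rw [← mul_assoc]
  -- the key vanishing lemma
  have hkey : ∀ (u : A), u ∈ 𝒜 1 → ∀ (s : List (Fin n)) (c : A),
      u * ((s.map θ).prod * (u * c)) = 0 := by
    intro u hu s
    induction s with
    | nil =>
      intro c
      simp only [List.map_nil, List.prod_nil, one_mul]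
      rw [← mul_assoc, hsq u hu, zero_mul]
    | cons j s ih =>
      intro c
      simp only [List.map_cons, List.prod_cons]
      calc u * (θ j * (s.map θ).prod * (u * c))
          = (u * θ j) * ((s.map θ).prod * (u * c)) := by
            rw [mul_assoc, mul_assoc]
        _ = (-(θ j * u)) * ((s.map θ).prod * (u * c)) := by
            rw [hodd u (θ j) hu (hθ j)]
        _ = -(θ j * (u * ((s.map θ).prod * (u * c)))) := by
            rw [neg_mul, mul_assoc]
        _ = 0 := by rw [ih c, mul_zero, neg_zero]
  -- any product of θ's with a duplicated index vanishes
  have hdup : ∀ (x : Fin n) (s : List (Fin n)), List.Duplicate x s → (s.map θ).prod = 0 := by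
    intro x s h
    induction h with
    | cons_mem hmem =>
      rename_i s'
      obtain ⟨s₁, s₂, rfl⟩ := List.append_of_mem hmem
      simp only [List.map_cons, List.prod_cons, List.map_append, List.prod_append,
        List.map_cons, List.prod_cons]
      rw [← mul_assoc (θ x)]
      rw [mul_assoc (θ x) ((s₁.map θ).prod)]
      exact hkey (θ x) (hθ x) s₁ ((s₂.map θ).prod)
    | cons_duplicate _ ih =>
      simp only [List.map_cons, List.prod_cons, ih, mul_zero]
  have hprodθ : ∀ s : List (Fin n), n < s.length → (s.map θ).prod = 0 := by
    intro s hs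
    have hnd : ¬ s.Nodup := by
      intro h
      have := h.length_le_card
      simp only [Fintype.card_fin] at this
      omega
    obtain ⟨x, hx⟩ := List.exists_duplicate_iff_not_nodup.mpr hnd
    exact hdup x s hx
  -- the additive subgroup of elements θ_j * b
  set K : AddSubgroup A := AddSubgroup.closure {x | ∃ j b, x = θ j * b} with hKdef
  -- T k
  set T : ℕ → AddSubgroup A := fun k =>
    AddSubgroup.closure {x | ∃ (s : List (Fin n)) (b : A), s.length = k ∧ x = (s.map θ).prod * b}
    with hTdef
  have hJK : ∀ x ∈ J, (x : A) ∈ K := by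
    intro x hx
    rw [← hgen, TwoSidedIdeal.mem_span_iff] at hx
    let I : TwoSidedIdeal A := TwoSidedIdeal.mk' (K : Set A)
      (AddSubgroup.zero_mem K)
      (fun h₁ h₂ => AddSubgroup.add_mem K h₁ h₂)
      (fun h₁ => AddSubgroup.neg_mem K h₁)
      (by
        intro c y hy
        refine AddSubgroup.closure_induction ?_ ?_ ?_ ?_ hy
        · rintro z ⟨j, b, rfl⟩
          have : c * (θ j * b) = θ j * (σ c * b) := by
            rw [← mul_assoc, hswap c (θ j) (hθ j), mul_assoc]
          rw [this]
          exact AddSubgroup.subset_closure ⟨j, σ c * b, rfl⟩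
        · rw [mul_zero]; exact AddSubgroup.zero_mem K
        · intro a b _ _ ha hb
          rw [mul_add]; exact AddSubgroup.add_mem K ha hb
        · intro a _ ha
          rw [mul_neg]; exact AddSubgroup.neg_mem K ha)
      (by
        intro y c hy
        refine AddSubgroup.closure_induction ?_ ?_ ?_ ?_ hy
        · rintro z ⟨j, b, rfl⟩
          rw [mul_assoc]
          exact AddSubgroup.subset_closure ⟨j, b * c, rfl⟩
        · rw [zero_mul]; exact AddSubgroup.zero_mem K
        · intro a b _ _ ha hb
          rw [add_mul]; exact AddSubgroup.add_mem K ha hb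
        · intro a _ ha
          rw [neg_mul]; exact AddSubgroup.neg_mem K ha)
    have := hx I (by
      rintro _ ⟨j, rfl⟩
      rw [SetLike.mem_coe, TwoSidedIdeal.mem_mk']
      exact AddSubgroup.subset_closure ⟨j, 1, (mul_one _).symm⟩)
    rwa [TwoSidedIdeal.mem_mk'] at this
  -- multiplication K * T k ⊆ T (k+1)
  have hmul : ∀ (k : ℕ) (x : A), x ∈ K → ∀ y ∈ T k, x * y ∈ T (k + 1) := by
    intro k x hx
    refine AddSubgroup.closure_induction ?_ ?_ ?_ ?_ hx
    · rintro z ⟨j, b, rfl⟩ y hy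
      refine AddSubgroup.closure_induction ?_ ?_ ?_ ?_ hy
      · rintro w ⟨s, c, hs, rfl⟩
        have : θ j * b * ((s.map θ).prod * c)
            = ((j :: s).map θ).prod * (σ^[s.length] b * c) := by
          simp only [List.map_cons, List.prod_cons]
          rw [mul_assoc, ← mul_assoc b, hswapList s b, mul_assoc, mul_assoc]
        rw [this]
        exact AddSubgroup.subset_closure ⟨j :: s, _, by simp [hs], rfl⟩
      · rw [mul_zero]; exact AddSubgroup.zero_mem _
      · intro a b' _ _ ha hb
        rw [mul_add]; exact AddSubgroup.add_mem _ ha hb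
      · intro a _ ha
        rw [mul_neg]; exact AddSubgroup.neg_mem _ ha
    · intro y _; rw [zero_mul]; exact AddSubgroup.zero_mem _
    · intro a b _ _ ha hb y hy
      rw [add_mul]; exact AddSubgroup.add_mem _ (ha y hy) (hb y hy)
    · intro a _ ha y hy
      rw [neg_mul]; exact AddSubgroup.neg_mem _ (ha y hy)
  -- products of elements of J land in T of the length
  have hT : ∀ l : List A, (∀ a ∈ l, a ∈ J) → l.prod ∈ T l.length := by
    intro l
    induction l with
    | nil =>
      intro _
      simp only [List.prod_nil, List.length_nil]
      exact AddSubgroup.subset_closure ⟨[], 1, rfl, by simp⟩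
    | cons a l ih =>
      intro h
      simp only [List.prod_cons, List.length_cons]
      exact hmul l.length a (hJK a (h a List.mem_cons_self))
        l.prod (ih fun b hb => h b (List.mem_cons_of_mem a hb))
  -- conclude
  intro l hlen hmem
  have hl := hT l hmem
  rw [hlen] at hl
  have hbot : T (n + 1) ≤ ⊥ := by
    rw [hTdef]
    rw [AddSubgroup.closure_le]
    rintro _ ⟨s, b, hs, rfl⟩
    rw [hprodθ s (by omega), zero_mul]
    simp
  simpa using hbot hl
end

section
/- Let f : A → B be a local homomorphism of commutative local rings (i.e. f maps the maximal ideal m_A of A into the maximal ideal of B) such that B is flat as an A-module. Then for every A-module M one has length_B(B ⊗_A M) = length_B(B / m_A·B) * length_A(M) as elements of ℕ∞. In particular, if B/m_A·B has finite length as a B-module, then M has finite length over A if and only if B ⊗_A M has finite length over B. -/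
/-- The length of a module: the supremum of the lengths of strictly increasing chains of
submodules, valued in `ℕ∞`. -/
noncomputable def Module.length' (R M : Type*) [Ring R] [AddCommGroup M] [Module R M] : ℕ∞ :=
  ⨆ p : LTSeries (Submodule R M), (p.length : ℕ∞)

namespace LengthAux

open Order

lemma length_eq_height (R M : Type*) [Ring R] [AddCommGroup M] [Module R M] :
    Module.length' R M = Order.height (⊤ : Submodule R M) := by
  apply le_antisymm
  · exact iSup_le fun p => Order.length_le_height le_top
  · rw [Order.height_eq_iSup_last_eq]
    exact iSup_le fun p => iSup_le fun _ => le_iSup (fun p : LTSeries _ => (p.length : ℕ∞)) p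

lemma length_le_of_strictMono {R M S P : Type*} [Ring R] [AddCommGroup M] [Module R M]
    [Ring S] [AddCommGroup P] [Module S P]
    (f : Submodule R M → Submodule S P) (hf : StrictMono f) :
    Module.length' R M ≤ Module.length' S P :=
  iSup_le fun p => le_iSup_of_le (p.map f hf) (by rfl)

lemma length_eq_of_equiv {R M P : Type*} [Ring R] [AddCommGroup M] [Module R M]
    [AddCommGroup P] [Module R P] (e : M ≃ₗ[R] P) :
    Module.length' R M = Module.length' R P :=
  le_antisymm
    (length_le_of_strictMono _ (Submodule.orderIsoMapComap e).strictMono)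
    (length_le_of_strictMono _ (Submodule.orderIsoMapComap e).symm.strictMono)

lemma height_succ_le {α : Type*} [Preorder α] {x y : α} (h : x < y) :
    Order.height x + 1 ≤ Order.height y := by
  by_cases hfin : Order.height x < ⊤
  · have := Order.height_strictMono h hfin
    rwa [ENat.add_one_le_iff (by exact hfin.ne)]
  · have hx : Order.height x = ⊤ := by simpa using hfin
    have hy : Order.height y = ⊤ := eq_top_iff.2 (hx ▸ Order.height_mono h.le)
    simp [hx, hy]

lemma ltseries_prod_le {β γ : Type*} [PartialOrder β] [PartialOrder γ]
    (q : LTSeries (β × γ)) :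
    (q.length : ℕ∞) ≤ Order.height q.last.1 + Order.height q.last.2 := by
  suffices H : ∀ (n : ℕ) (q : LTSeries (β × γ)), q.length = n →
      (q.length : ℕ∞) ≤ Order.height q.last.1 + Order.height q.last.2 from H _ q rfl
  intro n
  induction n with
  | zero => intro q hn; simp [hn]
  | succ n ih =>
    intro q hn
    have hlen : q.eraseLast.length = n := by simp [hn]
    have h2 := hlen ▸ ih q.eraseLast hlen
    have hlt : q.eraseLast.last < q.last :=
      q.eraseLast_last_rel_last (by omega)
    rw [hn]
    rcases Prod.lt_iff.1 hlt with ⟨h1, hle⟩ | ⟨hle, h1⟩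
    · calc ((n:ℕ∞) + 1) ≤ (Order.height q.eraseLast.last.1 + Order.height q.eraseLast.last.2) + 1 :=
            add_le_add_left h2 1
      _ = (Order.height q.eraseLast.last.1 + 1) + Order.height q.eraseLast.last.2 := by ring
      _ ≤ Order.height q.last.1 + Order.height q.last.2 :=
            add_le_add (height_succ_le h1) (Order.height_mono hle)
    · calc ((n:ℕ∞) + 1) ≤ (Order.height q.eraseLast.last.1 + Order.height q.eraseLast.last.2) + 1 :=
            add_le_add_left h2 1
      _ = Order.height q.eraseLast.last.1 + (Order.height q.eraseLast.last.2 + 1) := by ring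
      _ ≤ Order.height q.last.1 + Order.height q.last.2 :=
            add_le_add (Order.height_mono hle) (height_succ_le h1)

section Additivity

variable {R M : Type*} [Ring R] [AddCommGroup M] [Module R M] (N : Submodule R M)

lemma strictMono_pair :
    StrictMono (fun x : Submodule R M =>
      ((Submodule.comap N.subtype x, Submodule.map N.mkQ x) :
        Submodule R N × Submodule R (M ⧸ N))) := by
  intro x y hxy
  refine lt_of_le_of_ne
    ⟨Submodule.comap_mono hxy.le, Submodule.map_mono hxy.le⟩ ?_
  intro heq
  have h1 : Submodule.comap N.subtype x = Submodule.comap N.subtype y :=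
    congrArg Prod.fst heq
  have h2 : Submodule.map N.mkQ x = Submodule.map N.mkQ y :=
    congrArg Prod.snd heq
  refine hxy.ne (le_antisymm hxy.le ?_)
  intro m hm
  have : N.mkQ m ∈ Submodule.map N.mkQ x := h2 ▸ Submodule.mem_map_of_mem hm
  obtain ⟨x', hx', hxm⟩ := this
  have hsub : m - x' ∈ N := by
    rw [← Submodule.Quotient.eq]
    exact hxm.symm
  have hsuby : m - x' ∈ y := sub_mem hm (hxy.le hx')
  have : (⟨m - x', hsub⟩ : N) ∈ Submodule.comap N.subtype x := by
    rw [h1]; exact hsuby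
  have hx'' : m - x' ∈ x := this
  simpa using add_mem hx'' hx'

lemma length_le_add_quot :
    Module.length' R M ≤ Module.length' R N + Module.length' R (M ⧸ N) := by
  refine iSup_le fun p => ?_
  have := ltseries_prod_le (p.map _ (strictMono_pair N))
  refine le_trans this (add_le_add ?_ ?_)
  · rw [length_eq_height]; exact Order.height_mono le_top
  · rw [length_eq_height]; exact Order.height_mono le_top

lemma add_quot_le_length :
    Module.length' R N + Module.length' R (M ⧸ N) ≤ Module.length' R M := by
  have key : ∀ (r : LTSeries (Submodule R N)) (s : LTSeries (Submodule R (M ⧸ N))),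
      (r.length : ℕ∞) + s.length ≤ Module.length' R M := by
    intro r s
    have hmapinj : Function.Injective (Submodule.map N.subtype) :=
      Submodule.map_injective_of_injective N.injective_subtype
    have hcomapinj : Function.Injective (Submodule.comap N.mkQ) :=
      Submodule.comap_injective_of_surjective N.mkQ_surjective
    have hmapmono : Monotone (Submodule.map N.subtype) := fun _ _ h => Submodule.map_mono h
    have hcomapmono : Monotone (Submodule.comap N.mkQ) := fun _ _ h => Submodule.comap_mono h
    let r' : LTSeries (Submodule R M) :=
      r.map _ (hmapmono.strictMono_of_injective hmapinj)
    let s' : LTSeries (Submodule R M) :=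
      s.map _ (hcomapmono.strictMono_of_injective hcomapinj)
    have hr : r'.last ≤ N := by
      simpa [r'] using Submodule.map_subtype_le N _
    have hs : N ≤ s'.head := by
      show N ≤ Submodule.comap N.mkQ _
      intro x hx
      have : N.mkQ x = 0 := (Submodule.Quotient.mk_eq_zero _).2 hx
      simp [Submodule.mem_comap, this]
    rcases eq_or_lt_of_le (hr.trans hs) with heq | hlt
    · have := le_iSup (fun p : LTSeries (Submodule R M) => (p.length : ℕ∞))
        (RelSeries.smash r' s' heq)
      refine le_trans ?_ this
      simp [RelSeries.smash, r', s', LTSeries.map, RelSeries.map]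
    · have := le_iSup (fun p : LTSeries (Submodule R M) => (p.length : ℕ∞))
        (RelSeries.append r' s' hlt)
      refine le_trans ?_ this
      have : (RelSeries.append r' s' hlt).length = r.length + s.length + 1 := rfl
      rw [this]
      push_cast
      exact le_trans (le_add_of_nonneg_right zero_le) le_rfl
  rw [Module.length', Module.length']
  rw [ENat.iSup_add, ]
  refine iSup_le fun r => ?_
  rw [ENat.add_iSup]
  exact iSup_le fun s => key r s

lemma length_eq_add_quot :
    Module.length' R M = Module.length' R N + Module.length' R (M ⧸ N) :=
  le_antisymm (length_le_add_quot N) (add_quot_le_length N)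

end Additivity
section Simple

variable (R M : Type*) [Ring R] [AddCommGroup M] [Module R M]

lemma length_eq_zero_iff :
    Module.length' R M = 0 ↔ Subsingleton M := by
  constructor
  · intro h
    by_contra hns
    have : Nontrivial M := not_subsingleton_iff_nontrivial.1 hns
    have hbt : (⊥ : Submodule R M) < ⊤ := bot_lt_top
    have := le_iSup (fun p : LTSeries (Submodule R M) => (p.length : ℕ∞))
      ((RelSeries.singleton _ (⊥ : Submodule R M)).snoc ⊤ (by simpa using hbt))
    rw [Module.length'] at h
    rw [h] at this
    simp [RelSeries.snoc_length] at this
  · intro h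
    have hsub : Subsingleton (Submodule R M) := Submodule.subsingleton_iff R |>.2 h
    refine le_antisymm (iSup_le fun p => ?_) zero_le
    by_contra hp
    have hlen : p.length ≠ 0 := by
      intro h0; rw [h0] at hp; simp at hp
    have : p 0 < p (Fin.last _) := p.strictMono (by
      refine Fin.lt_def.2 ?_
      simpa using Nat.pos_of_ne_zero hlen)
    exact this.ne (Subsingleton.elim _ _)

lemma one_le_length_of_nontrivial [Nontrivial M] : 1 ≤ Module.length' R M := by
  rw [ENat.one_le_iff_ne_zero]
  intro h
  exact not_subsingleton_iff_nontrivial.2 ‹_› ((length_eq_zero_iff R M).1 h)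

lemma isSimpleModule_of_length_eq_one (h : Module.length' R M = 1) :
    IsSimpleModule R M := by
  have hnt : Nontrivial M := by
    by_contra hns
    rw [(length_eq_zero_iff R M).2 (not_nontrivial_iff_subsingleton.1 hns)] at h
    simp at h
  have : Nontrivial (Submodule R M) := ⟨⊥, ⊤, bot_ne_top⟩
  refine { eq_bot_or_eq_top := fun x => ?_ }
  by_contra hx
  push_neg at hx
  obtain ⟨hxb, hxt⟩ := hx
  have h1 : (⊥ : Submodule R M) < x := bot_lt_iff_ne_bot.2 hxb
  have h2 : x < ⊤ := lt_top_iff_ne_top.2 hxt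
  have := le_iSup (fun p : LTSeries (Submodule R M) => (p.length : ℕ∞))
    (((RelSeries.singleton _ (⊥ : Submodule R M)).snoc x (by simpa using h1)).snoc ⊤
      (by simpa using h2))
  rw [Module.length'] at h
  rw [h] at this
  simp [RelSeries.snoc_length] at this

lemma exists_chain_of_length_eq_coe {n : ℕ} (h : Module.length' R M = n) :
    ∃ p : LTSeries (Submodule R M), p.length = n ∧ p.head = ⊥ ∧ p.last = ⊤ := by
  rw [length_eq_height] at h
  obtain ⟨p, hlast, hlen⟩ := Order.exists_series_of_height_eq_coe _ h
  refine ⟨p, hlen, ?_, hlast⟩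
  by_contra hh
  have hbl : (⊥ : Submodule R M) < p.head := bot_lt_iff_ne_bot.2 hh
  have := le_iSup (fun q : LTSeries (Submodule R M) => (q.length : ℕ∞))
    (p.cons ⊥ (by simpa using hbl))
  rw [← length_eq_height, Module.length'] at h
  rw [h] at this
  have hc : (p.cons ⊥ (by simpa using hbl)).length = n + 1 := by
    simp [RelSeries.cons_length, hlen]
  rw [hc] at this
  exact absurd this (by exact_mod_cast Nat.not_succ_le_self n)

end Simple
section Tensor

open TensorProduct

variable {A B : Type*} [CommRing A] [CommRing B] [Algebra A B]

lemma smul_mk_one (I : Ideal A) (a : A) :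
    a • (Ideal.Quotient.mk I 1) = Ideal.Quotient.mk I a := by
  have h : (Ideal.Quotient.mk I 1) = Submodule.Quotient.mk (1 : A) := rfl
  rw [h, ← Submodule.Quotient.mk_smul, smul_eq_mul, mul_one]
  rfl

lemma smul_one_tmul (I : Ideal A) (a : A) :
    a • ((1 : B) ⊗ₜ[A] (Ideal.Quotient.mk I 1)) = (1 : B) ⊗ₜ[A] (Ideal.Quotient.mk I a) := by
  rw [← tmul_smul, smul_mk_one]

noncomputable def gbar (I : Ideal A) :
    (B ⧸ I.map (algebraMap A B)) →ₗ[B] B ⊗[A] (A ⧸ I) :=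
  Submodule.liftQ _ (LinearMap.toSpanSingleton B _ ((1 : B) ⊗ₜ[A] (Ideal.Quotient.mk I 1)))
    (by
      rw [Ideal.map, Ideal.span_le]
      rintro x ⟨a, ha, rfl⟩
      simp only [SetLike.mem_coe, LinearMap.mem_ker, LinearMap.toSpanSingleton_apply]
      rw [algebraMap_smul, smul_one_tmul, Ideal.Quotient.eq_zero_iff_mem.2 ha, tmul_zero])

lemma gbar_mk (I : Ideal A) (b : B) :
    gbar I (Submodule.Quotient.mk b) = b ⊗ₜ[A] (Ideal.Quotient.mk I 1) := by
  rw [gbar, Submodule.liftQ_apply, LinearMap.toSpanSingleton_apply,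
    TensorProduct.smul_tmul', smul_eq_mul, mul_one]

noncomputable def retr (I : Ideal A) :
    B ⊗[A] (A ⧸ I) →ₗ[A] (B ⧸ I.map (algebraMap A B)) :=
  TensorProduct.lift
    ((Submodule.liftQ I
      (LinearMap.toSpanSingleton A (B →ₗ[A] (B ⧸ I.map (algebraMap A B)))
        ((I.map (algebraMap A B)).mkQ.restrictScalars A))
      (by
        intro a ha
        simp only [LinearMap.mem_ker, LinearMap.toSpanSingleton_apply]
        ext b
        simp only [LinearMap.smul_apply, LinearMap.coe_restrictScalars,
          Submodule.mkQ_apply, LinearMap.zero_apply]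
        rw [← Submodule.Quotient.mk_smul, Submodule.Quotient.mk_eq_zero, Algebra.smul_def]
        exact Ideal.mul_mem_right _ _ (Ideal.mem_map_of_mem _ ha))).flip)

lemma retr_tmul_one (I : Ideal A) (b : B) :
    retr I (b ⊗ₜ[A] (Ideal.Quotient.mk I 1)) = Submodule.Quotient.mk b := by
  rw [retr, TensorProduct.lift.tmul, LinearMap.flip_apply]
  have : (Ideal.Quotient.mk I 1) = Submodule.Quotient.mk 1 := rfl
  rw [this, Submodule.liftQ_apply, LinearMap.toSpanSingleton_apply, one_smul]
  rfl

lemma retr_gbar (I : Ideal A) : Function.LeftInverse (retr (B := B) I) (gbar I) := by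
  intro y
  induction y using Submodule.Quotient.induction_on with
  | H b => rw [gbar_mk, retr_tmul_one]

lemma gbar_surjective (I : Ideal A) : Function.Surjective (gbar (B := B) I) := by
  intro z
  induction z with
  | zero => exact ⟨0, map_zero _⟩
  | tmul b q =>
    induction q using Submodule.Quotient.induction_on with
    | H a =>
      refine ⟨Submodule.Quotient.mk (algebraMap A B a * b), ?_⟩
      rw [gbar_mk]
      calc (algebraMap A B a * b) ⊗ₜ[A] (Ideal.Quotient.mk I 1)
          = (a • b) ⊗ₜ[A] (Ideal.Quotient.mk I 1) := by rw [Algebra.smul_def]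
        _ = b ⊗ₜ[A] (a • Ideal.Quotient.mk I 1) := TensorProduct.smul_tmul a b _
        _ = b ⊗ₜ[A] (Ideal.Quotient.mk I a) := by rw [smul_mk_one]
        _ = b ⊗ₜ[A] (Submodule.Quotient.mk a) := rfl
  | add x y hx hy =>
    obtain ⟨x', rfl⟩ := hx
    obtain ⟨y', rfl⟩ := hy
    exact ⟨x' + y', map_add _ _ _⟩

noncomputable def quotMapEquiv (I : Ideal A) :
    (B ⧸ I.map (algebraMap A B)) ≃ₗ[B] B ⊗[A] (A ⧸ I) :=
  LinearEquiv.ofBijective (gbar I) ⟨(retr_gbar I).injective, gbar_surjective I⟩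

end Tensor
section Flat

open TensorProduct

variable {A B : Type*} [CommRing A] [CommRing B] [Algebra A B] [Module.Flat A B]

lemma length_tensor_eq_add (M : Type*) [AddCommGroup M] [Module A M] (N : Submodule A M) :
    Module.length' B (B ⊗[A] M) =
      Module.length' B (B ⊗[A] N) + Module.length' B (B ⊗[A] (M ⧸ N)) := by
  set g : B ⊗[A] M →ₗ[B] B ⊗[A] (M ⧸ N) := N.mkQ.baseChange B with hg
  have hgcoe : ⇑g = ⇑(N.mkQ.lTensor B) := LinearMap.baseChange_eq_ltensor _
  have hscoe : ⇑(N.subtype.baseChange B) = ⇑(N.subtype.lTensor B) :=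
    LinearMap.baseChange_eq_ltensor _
  have hgs : Function.Surjective g := by
    rw [hgcoe]; exact LinearMap.lTensor_surjective B N.mkQ_surjective
  have hker : LinearMap.ker g = LinearMap.range (N.subtype.baseChange B) := by
    have h := lTensor_mkQ (Q := B) N
    ext x
    rw [LinearMap.mem_ker, LinearMap.mem_range]
    constructor
    · intro hx
      have : x ∈ LinearMap.ker (N.mkQ.lTensor B) := by
        rw [LinearMap.mem_ker, ← congrFun hgcoe x]; exact hx
      rw [h] at this
      obtain ⟨y, hy⟩ := this
      exact ⟨y, by rw [← hy, congrFun hscoe y]⟩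
    · rintro ⟨y, rfl⟩
      show g (N.subtype.baseChange B y) = 0
      rw [congrFun hscoe y, congrFun hgcoe _]
      have : N.subtype.lTensor B y ∈ LinearMap.ker (N.mkQ.lTensor B) := by
        rw [h]; exact LinearMap.mem_range_self _ y
      exact this
  have hinj : Function.Injective (N.subtype.baseChange B) := by
    rw [hscoe]
    exact Module.Flat.lTensor_preserves_injective_linearMap _ N.injective_subtype
  have e1 : (B ⊗[A] N) ≃ₗ[B] LinearMap.ker g :=
    (LinearEquiv.ofInjective _ hinj).trans (LinearEquiv.ofEq _ _ hker.symm)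
  have e2 : ((B ⊗[A] M) ⧸ LinearMap.ker g) ≃ₗ[B] B ⊗[A] (M ⧸ N) :=
    g.quotKerEquivOfSurjective hgs
  rw [length_eq_add_quot (LinearMap.ker g), length_eq_of_equiv (M := B ⊗[A] N) (P := LinearMap.ker g) e1,
    length_eq_of_equiv e2]

lemma subsingleton_tensor (M : Type*) [AddCommGroup M] [Module A M] [Subsingleton M] :
    Subsingleton (B ⊗[A] M) := by
  refine subsingleton_iff_forall_eq 0 |>.2 fun x => ?_
  induction x with
  | zero => rfl
  | tmul b m => rw [show m = 0 from Subsingleton.elim m 0, tmul_zero]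
  | add x y hx hy => rw [hx, hy, add_zero]

variable [Module.FaithfullyFlat A B]

lemma baseChange_range_strictMono (M : Type*) [AddCommGroup M] [Module A M] :
    StrictMono (fun N : Submodule A M => LinearMap.range (N.subtype.baseChange B)) := by
  have hmono : Monotone (fun N : Submodule A M => LinearMap.range (N.subtype.baseChange B)) := by
    intro N N' hle
    show LinearMap.range (N.subtype.baseChange B) ≤ LinearMap.range (N'.subtype.baseChange B)
    have hcomp : N.subtype = N'.subtype.comp (Submodule.inclusion hle) := rfl
    rw [hcomp, LinearMap.baseChange_comp]
    rw [LinearMap.range_comp]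
    exact LinearMap.map_le_range
  intro N N' hlt
  refine lt_of_le_of_ne (hmono hlt.le) ?_
  intro heq
  dsimp only at heq
  -- derive contradiction
  set K : Submodule A N' := Submodule.comap N'.subtype N with hK
  have hKlt : K < ⊤ := by
    obtain ⟨x, hxN', hxN⟩ := SetLike.exists_of_lt hlt
    refine lt_top_iff_ne_top.2 fun htop => hxN ?_
    have : (⟨x, hxN'⟩ : N') ∈ K := htop ▸ Submodule.mem_top
    exact this
  have : Nontrivial (N' ⧸ K) := Submodule.Quotient.nontrivial_iff.2 hKlt.ne
  have hQ : Nontrivial (B ⊗[A] (N' ⧸ K)) :=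
    Module.FaithfullyFlat.lTensor_nontrivial A B _
  -- inclusion ι : N → N'
  set ι : N →ₗ[A] N' := Submodule.inclusion hlt.le with hι
  have hcomp : N.subtype = N'.subtype.comp ι := rfl
  have hinj' : Function.Injective (N'.subtype.baseChange B) := by
    rw [show ⇑(N'.subtype.baseChange B) = ⇑(N'.subtype.lTensor B) from
      LinearMap.baseChange_eq_ltensor _]
    exact Module.Flat.lTensor_preserves_injective_linearMap _ N'.injective_subtype
  -- range of baseChange ι is everything
  have hrange : LinearMap.range (ι.baseChange B) = ⊤ := by
    rw [eq_top_iff]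
    rintro y -
    have : (N'.subtype.baseChange B) y ∈ LinearMap.range (N.subtype.baseChange B) := by
      rw [heq]; exact LinearMap.mem_range_self _ y
    obtain ⟨z, hz⟩ := this
    rw [hcomp, LinearMap.baseChange_comp, LinearMap.comp_apply] at hz
    exact ⟨z, hinj' hz⟩
  have hzero : K.mkQ.comp ι = 0 := by
    ext n
    simp only [LinearMap.comp_apply, LinearMap.zero_apply, Submodule.mkQ_apply,
      Submodule.Quotient.mk_eq_zero]
    exact n.2
  have hsurj : Function.Surjective (K.mkQ.baseChange B) := by
    rw [show ⇑(K.mkQ.baseChange B) = ⇑(K.mkQ.lTensor B) from LinearMap.baseChange_eq_ltensor _]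
    exact LinearMap.lTensor_surjective B K.mkQ_surjective
  have : ∀ z : B ⊗[A] (N' ⧸ K), z = 0 := by
    intro z
    obtain ⟨w, rfl⟩ := hsurj z
    obtain ⟨v, rfl⟩ := hrange.symm ▸ Submodule.mem_top (x := w) (R := B)
    show (K.mkQ.baseChange B) ((ι.baseChange B) v) = 0
    rw [← LinearMap.comp_apply, ← LinearMap.baseChange_comp, hzero]
    simp
  obtain ⟨x, y, hxy⟩ := hQ
  exact hxy (by rw [this x, this y])

end Flat
section Main

open TensorProduct IsLocalRing

variable {A B : Type*} [CommRing A] [CommRing B] [IsLocalRing A] [IsLocalRing B] [Algebra A B]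

lemma map_maximalIdeal_ne_top
    (hloc : ∀ a ∈ maximalIdeal A, algebraMap A B a ∈ maximalIdeal B) :
    (maximalIdeal A).map (algebraMap A B) ≠ ⊤ := by
  intro htop
  have hle : (maximalIdeal A).map (algebraMap A B) ≤ maximalIdeal B :=
    Ideal.map_le_iff_le_comap.2 hloc
  rw [htop] at hle
  exact (maximalIdeal B).ne_top_iff_one.1 (IsLocalRing.maximalIdeal.isMaximal B).ne_top
    (hle Submodule.mem_top)

lemma faithfullyFlat_of_local
    (hloc : ∀ a ∈ maximalIdeal A, algebraMap A B a ∈ maximalIdeal B)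
    [Module.Flat A B] : Module.FaithfullyFlat A B := by
  refine { toFlat := inferInstance, submodule_ne_top := ?_ }
  intro m hm htop
  rw [IsLocalRing.eq_maximalIdeal hm] at htop
  rw [Ideal.smul_top_eq_map] at htop
  rw [Submodule.restrictScalars_eq_top_iff] at htop
  exact map_maximalIdeal_ne_top hloc htop

variable [Module.Flat A B]

lemma key_finite
    (hloc : ∀ a ∈ maximalIdeal A, algebraMap A B a ∈ maximalIdeal B) (n : ℕ) :
    ∀ (M : Type*) [AddCommGroup M] [Module A M], Module.length' A M = n →
      Module.length' B (B ⊗[A] M) =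
        Module.length' B (B ⧸ (maximalIdeal A).map (algebraMap A B)) * n := by
  set c := Module.length' B (B ⧸ (maximalIdeal A).map (algebraMap A B)) with hc
  induction n with
  | zero =>
    intro M _ _ hM
    haveI : Subsingleton M := (length_eq_zero_iff A M).1 (by exact_mod_cast hM)
    haveI : Subsingleton (B ⊗[A] M) := subsingleton_tensor M
    rw [(length_eq_zero_iff B (B ⊗[A] M)).2 inferInstance]
    simp
  | succ n ih =>
    intro M _ _ hM
    obtain ⟨p, hplen, hphead, hplast⟩ := exists_chain_of_length_eq_coe A M hM
    have hlen0 : p.length ≠ 0 := by omega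
    have hel : p.eraseLast.length = n := by simp [hplen]
    set N : Submodule A M := p.eraseLast.last with hN
    have hNlt : N < ⊤ := by
      rw [← hplast]
      exact p.eraseLast_last_rel_last hlen0
    -- every element of p.eraseLast is ≤ N
    have hle : ∀ i, p.eraseLast i ≤ N := fun i => LTSeries.monotone p.eraseLast (Fin.le_last i)
    -- chain inside N
    have hq : StrictMono (fun i : Fin (n + 1) =>
        Submodule.comap N.subtype (p.eraseLast ⟨i, by omega⟩)) := by
      intro i j hij
      have hab : p.eraseLast ⟨i, by omega⟩ < p.eraseLast ⟨j, by omega⟩ :=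
        LTSeries.strictMono p.eraseLast (Fin.mk_lt_mk.mpr hij)
      refine lt_of_le_of_ne (Submodule.comap_mono hab.le) ?_
      intro heq
      have hmapa := congrArg (Submodule.map N.subtype) heq
      rw [Submodule.map_comap_subtype, Submodule.map_comap_subtype,
        inf_eq_right.2 (hle _), inf_eq_right.2 (hle _)] at hmapa
      exact hab.ne hmapa
    have hna : (n : ℕ∞) ≤ Module.length' A N := by
      have := le_iSup (fun q : LTSeries (Submodule A N) => (q.length : ℕ∞))
        (LTSeries.mk n (fun i => Submodule.comap N.subtype (p.eraseLast ⟨i, by omega⟩)) hq)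
      exact this
    haveI : Nontrivial (M ⧸ N) := Submodule.Quotient.nontrivial_iff.2 hNlt.ne
    have h1 : (1 : ℕ∞) ≤ Module.length' A (M ⧸ N) := one_le_length_of_nontrivial A _
    have hadd : Module.length' A M = Module.length' A N + Module.length' A (M ⧸ N) :=
      length_eq_add_quot N
    rw [hM] at hadd
    -- conclude exact lengths
    have hxn : Module.length' A N = n := by
      have hub : Module.length' A N + 1 ≤ (n : ℕ∞) + 1 := by
        calc Module.length' A N + 1 ≤ Module.length' A N + Module.length' A (M ⧸ N) :=
              add_le_add_right h1 _
          _ = (n : ℕ∞) + 1 := by rw [← hadd]; push_cast; ring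
      have := (WithTop.add_le_add_iff_right (by simp : (1 : ℕ∞) ≠ ⊤)).1 hub
      exact le_antisymm this hna
    have hy1 : Module.length' A (M ⧸ N) = 1 := by
      have hub : (n : ℕ∞) + Module.length' A (M ⧸ N) ≤ (n : ℕ∞) + 1 := by
        calc (n : ℕ∞) + Module.length' A (M ⧸ N)
            ≤ Module.length' A N + Module.length' A (M ⧸ N) := add_le_add_left hna _
          _ = (n : ℕ∞) + 1 := by rw [← hadd]; push_cast; ring
      have := (WithTop.add_le_add_iff_left (by simp : (n : ℕ∞) ≠ ⊤)).1 hub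
      exact le_antisymm this h1
    haveI hsimple : IsSimpleModule A (M ⧸ N) := isSimpleModule_of_length_eq_one A _ hy1
    obtain ⟨I, hImax, ⟨e⟩⟩ := isSimpleModule_iff_quot_maximal.1 hsimple
    have hIm : I = maximalIdeal A := IsLocalRing.eq_maximalIdeal hImax
    subst hIm
    have hQlen : Module.length' B (B ⊗[A] (M ⧸ N)) = c := by
      rw [length_eq_of_equiv (LinearEquiv.baseChange A B _ _ e),
        length_eq_of_equiv (quotMapEquiv (maximalIdeal A)).symm]
    calc Module.length' B (B ⊗[A] M)
        = Module.length' B (B ⊗[A] N) + Module.length' B (B ⊗[A] (M ⧸ N)) :=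
          length_tensor_eq_add M N
      _ = c * n + c := by rw [ih N hxn, hQlen]
      _ = c * (n + 1 : ℕ) := by push_cast; ring

end Main
end LengthAux

open TensorProduct IsLocalRing in
/-- For a flat local homomorphism `A → B` of local rings, the `B`-length of `B ⊗[A] M` is
`length_B (B / m_A B) * length_A M`; in particular, if `B / m_A B` has finite length, then
`M` has finite length over `A` iff `B ⊗[A] M` has finite length over `B`. -/
theorem Module.length_baseChange_of_flat_localHom
    (A B : Type*) [CommRing A] [CommRing B] [IsLocalRing A] [IsLocalRing B]
    [Algebra A B]
    (hloc : ∀ a ∈ maximalIdeal A, algebraMap A B a ∈ maximalIdeal B)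
    [Module.Flat A B]
    (M : Type*) [AddCommGroup M] [Module A M] :
    Module.length' B (B ⊗[A] M) =
      Module.length' B (B ⧸ (maximalIdeal A).map (algebraMap A B)) * Module.length' A M ∧
    (Module.length' B (B ⧸ (maximalIdeal A).map (algebraMap A B)) < ⊤ →
      (Module.length' A M < ⊤ ↔ Module.length' B (B ⊗[A] M) < ⊤)) := by
  set c := Module.length' B (B ⧸ (maximalIdeal A).map (algebraMap A B)) with hc
  have hJ : (maximalIdeal A).map (algebraMap A B) ≠ ⊤ :=
    LengthAux.map_maximalIdeal_ne_top hloc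
  haveI : Nontrivial (B ⧸ (maximalIdeal A).map (algebraMap A B)) :=
    Submodule.Quotient.nontrivial_iff.2 (lt_top_iff_ne_top.2 hJ).ne
  have hc0 : c ≠ 0 := by
    rw [hc, Ne, LengthAux.length_eq_zero_iff]
    exact not_subsingleton _
  have main : Module.length' B (B ⊗[A] M) = c * Module.length' A M := by
    cases hfin : Module.length' A M with
    | top =>
      haveI : Module.FaithfullyFlat A B := LengthAux.faithfullyFlat_of_local hloc
      have hle : Module.length' A M ≤ Module.length' B (B ⊗[A] M) :=
        LengthAux.length_le_of_strictMono _ (LengthAux.baseChange_range_strictMono M)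
      rw [hfin] at hle
      rw [top_le_iff.1 hle, ENat.mul_top hc0]
    | coe n => exact LengthAux.key_finite hloc n M hfin
  refine ⟨main, fun hcfin => ⟨fun hM => ?_, fun hBM => ?_⟩⟩
  · rw [main]
    exact WithTop.mul_lt_top hcfin hM
  · by_contra hM
    have : Module.length' A M = ⊤ := by
      rcases eq_or_ne (Module.length' A M) ⊤ with h | h
      · exact h
      · exact absurd (lt_top_iff_ne_top.2 h) hM
    rw [main, this, ENat.mul_top hc0] at hBM
    exact absurd hBM (lt_irrefl _)
end

section
/- Let R be a commutative domain and let a, b ∈ R be nonzero elements. Then length_R(R/(a·b)) = length_R(R/(a)) + length_R(R/(b)) as elements of ℕ∞; in particular, if the quotients R/(a) and R/(b) have finite length as R-modules, then so does R/(a·b). -/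
noncomputable def supLen (α : Type*) [Preorder α] : ℕ∞ :=
  ⨆ p : LTSeries α, (p.length : ℕ∞)

lemma supLen_le_of_strictMono {α β : Type*} [Preorder α] [Preorder β]
    (f : α → β) (hf : StrictMono f) : supLen α ≤ supLen β :=
  iSup_le fun p => le_iSup (fun p : LTSeries β => (p.length : ℕ∞)) (p.map f hf)

lemma supLen_eq_of_orderIso {α β : Type*} [Preorder α] [Preorder β] (e : α ≃o β) :
    supLen α = supLen β :=
  le_antisymm (supLen_le_of_strictMono e e.strictMono)
    (supLen_le_of_strictMono e.symm e.symm.strictMono)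

lemma exists_split {α : Type*} [Lattice α] [IsModularLattice α] (N : α) :
    ∀ (n : ℕ) (p : LTSeries α), p.length = n →
    ∃ (q : LTSeries {x // x ≤ N}) (r : LTSeries {x // N ≤ x}),
      (q.last : α) = p.last ⊓ N ∧ (r.last : α) = p.last ⊔ N ∧
      p.length ≤ q.length + r.length := by
  intro n
  induction n with
  | zero =>
    intro p hp
    exact ⟨RelSeries.singleton _ ⟨p.last ⊓ N, inf_le_right⟩,
      RelSeries.singleton _ ⟨p.last ⊔ N, le_sup_right⟩, rfl, rfl, by omega⟩
  | succ n ih =>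
    intro p hp
    have hl : p.length ≠ 0 := by omega
    have hplen : p.eraseLast.length = n := by
      simp [RelSeries.eraseLast, hp]
    obtain ⟨q, r, hq, hr, hlen⟩ := ih p.eraseLast hplen
    have hlt : p.eraseLast.last < p.last := p.eraseLast_last_rel_last hl
    have hinf : p.eraseLast.last ⊓ N ≤ p.last ⊓ N := inf_le_inf_right _ hlt.le
    have hsup : p.eraseLast.last ⊔ N ≤ p.last ⊔ N := sup_le_sup_right hlt.le _
    rcases lt_or_eq_of_le hinf with hinf' | hinf' <;>
      rcases lt_or_eq_of_le hsup with hsup' | hsup'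
    · exact ⟨q.snoc ⟨p.last ⊓ N, inf_le_right⟩ (by show _ < _; exact Subtype.coe_lt_coe.mp (hq.trans_lt hinf')),
        r.snoc ⟨p.last ⊔ N, le_sup_right⟩ (by show _ < _; exact Subtype.coe_lt_coe.mp (hr.trans_lt hsup')),
        by simp, by simp, by simpa [RelSeries.snoc, RelSeries.append] using by omega⟩
    · exact ⟨q.snoc ⟨p.last ⊓ N, inf_le_right⟩ (by show _ < _; exact Subtype.coe_lt_coe.mp (hq.trans_lt hinf')),
        r, by simp, by rw [hr, hsup'], by simpa [RelSeries.snoc, RelSeries.append] using by omega⟩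
    · exact ⟨q, r.snoc ⟨p.last ⊔ N, le_sup_right⟩ (by show _ < _; exact Subtype.coe_lt_coe.mp (hr.trans_lt hsup')),
        by rw [hq, hinf'], by simp, by simpa [RelSeries.snoc, RelSeries.append] using by omega⟩
    ·      exact absurd (sup_lt_sup_of_lt_of_inf_le_inf hlt hinf'.ge) (hsup' ▸ lt_irrefl _)

lemma le_supLen_split {α : Type*} [Lattice α] (N : α)
    (q : LTSeries {x // x ≤ N}) (r : LTSeries {x // N ≤ x}) :
    (q.length : ℕ∞) + r.length ≤ supLen α := by
  have hvq : StrictMono (Subtype.val : {x // x ≤ N} → α) := fun _ _ h => h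
  have hvr : StrictMono (Subtype.val : {x // N ≤ x} → α) := fun _ _ h => h
  set q' := q.map _ hvq with hq'
  set r' := r.map _ hvr with hr'
  have h1 : q'.last ≤ N := q.last.2
  have h2 : N ≤ r'.head := r.head.2
  rcases eq_or_lt_of_le (h1.trans h2) with h | h
  · have := le_iSup (fun p : LTSeries α => (p.length : ℕ∞)) (q'.smash r' h)
    refine le_trans ?_ this
    have : (q'.smash r' h).length = q.length + r.length := rfl
    rw [this]; push_cast; rfl
  · have := le_iSup (fun p : LTSeries α => (p.length : ℕ∞)) (q'.append r' h)
    refine le_trans ?_ this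
    have : (q'.append r' h).length = q.length + r.length + 1 := rfl
    rw [this]; push_cast
    exact le_self_add

lemma supLen_split {α : Type*} [Lattice α] [IsModularLattice α] (N : α) :
    supLen α = supLen {x // x ≤ N} + supLen {x // N ≤ x} := by
  haveI : Nonempty (LTSeries {x // x ≤ N}) := ⟨RelSeries.singleton _ ⟨N, le_refl N⟩⟩
  haveI : Nonempty (LTSeries {x // N ≤ x}) := ⟨RelSeries.singleton _ ⟨N, le_refl N⟩⟩
  apply le_antisymm
  · apply iSup_le
    intro p
    obtain ⟨q, r, _, _, hlen⟩ := exists_split N p.length p rfl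
    calc (p.length : ℕ∞) ≤ (q.length : ℕ∞) + (r.length : ℕ∞) := by exact_mod_cast hlen
      _ ≤ _ := add_le_add (le_iSup (fun p : LTSeries _ => (p.length : ℕ∞)) q)
          (le_iSup (fun p : LTSeries _ => (p.length : ℕ∞)) r)
  · exact ENat.iSup_add_iSup_le fun q r => le_supLen_split N q r

lemma Module.length_eq_of_equiv {R M M' : Type*} [Ring R] [AddCommGroup M] [Module R M]
    [AddCommGroup M'] [Module R M'] (e : M ≃ₗ[R] M') :
    Module.length' R M = Module.length' R M' :=
  supLen_eq_of_orderIso (Submodule.orderIsoMapComap e)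

lemma Module.length_eq_add {R M : Type*} [Ring R] [AddCommGroup M] [Module R M]
    (N : Submodule R M) :
    Module.length' R M = Module.length' R N + Module.length' R (M ⧸ N) := by
  have h1 : Module.length' R N = supLen {x : Submodule R M // x ≤ N} :=
    supLen_eq_of_orderIso (Submodule.MapSubtype.orderIso N)
  have h2 : Module.length' R (M ⧸ N) = supLen {x : Submodule R M // N ≤ x} :=
    supLen_eq_of_orderIso (Submodule.comapMkQRelIso N)
  rw [h1, h2]
  exact supLen_split N

/-- In a commutative domain `R`, for nonzero `a b : R` one has
`length (R/(a·b)) = length (R/(a)) + length (R/(b))`; in particular, if `R/(a)` and `R/(b)`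
have finite length, so does `R/(a·b)`. -/
theorem Module.length_quotient_span_mul
    (R : Type*) [CommRing R] [IsDomain R] (a b : R) (ha : a ≠ 0) (hb : b ≠ 0) :
    Module.length' R (R ⧸ Ideal.span {a * b}) =
      Module.length' R (R ⧸ Ideal.span {a}) + Module.length' R (R ⧸ Ideal.span {b}) ∧
    (Module.length' R (R ⧸ Ideal.span {a}) < ⊤ → Module.length' R (R ⧸ Ideal.span {b}) < ⊤ →
      Module.length' R (R ⧸ Ideal.span {a * b}) < ⊤) := by
  set I : Submodule R R := Ideal.span {a * b} with hI
  set J : Submodule R R := Ideal.span {b} with hJ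
  have hIJ : I ≤ J := by
    rw [hI, hJ, Ideal.span_singleton_le_span_singleton]
    exact ⟨a, mul_comm a b⟩
  set N : Submodule R (R ⧸ I) := J.map I.mkQ with hN
  -- the linear map x ↦ [x * b]
  set f : R →ₗ[R] R ⧸ I := I.mkQ.comp (LinearMap.toSpanSingleton R R b) with hf
  have hker : LinearMap.ker f = (Ideal.span {a} : Ideal R) := by
    ext x
    simp only [hf, LinearMap.mem_ker, LinearMap.comp_apply, LinearMap.toSpanSingleton_apply,
      Submodule.mkQ_apply, Submodule.Quotient.mk_eq_zero, hI]
    rw [smul_eq_mul, Ideal.mem_span_singleton, Ideal.mem_span_singleton,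
      mul_comm x b, mul_comm a b]
    exact (mul_dvd_mul_iff_left hb)
  have hrange : LinearMap.range f = N := by
    rw [hf, LinearMap.range_comp, ← LinearMap.span_singleton_eq_range R R b, hN, hJ,
      Ideal.submodule_span_eq]
  have e1 : (R ⧸ Ideal.span {a}) ≃ₗ[R] N :=
    (Submodule.quotEquivOfEq _ _ hker.symm).trans
      (f.quotKerEquivRange.trans (LinearEquiv.ofEq _ _ hrange))
  have e2 : ((R ⧸ I) ⧸ N) ≃ₗ[R] R ⧸ J :=
    Submodule.quotientQuotientEquivQuotient I J hIJ
  have key : Module.length' R (R ⧸ I) =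
      Module.length' R (R ⧸ Ideal.span {a}) + Module.length' R (R ⧸ Ideal.span {b}) := by
    rw [Module.length_eq_add N, Module.length_eq_of_equiv e1.symm,
      Module.length_eq_of_equiv e2]
  refine ⟨key, fun h1 h2 => ?_⟩
  rw [key]
  exact WithTop.add_lt_top.mpr ⟨h1, h2⟩
end

section
/- Let κ be a field and let C be a commutative κ-algebra which is finite-dimensional as a κ-vector space. Then C has only finitely many maximal ideals; for each maximal ideal 𝔪 of C the localization C_𝔪 has finite length as a module over itself and the residue field C/𝔪 is a finite-dimensional κ-vector space; and finrank_κ(C) = Σ_𝔪 length_{C_𝔪}(C_𝔪) · finrank_κ(C/𝔪), the sum running over all maximal ideals 𝔪 of C. -/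
/-- The length of a module: the supremum of the lengths of strictly increasing chains of
submodules, valued in `ℕ∞`. -/
noncomputable def Module.chainLength (R M : Type*) [Ring R] [AddCommGroup M] [Module R M] : ℕ∞ :=
  ⨆ p : LTSeries (Submodule R M), (p.length : ℕ∞)

open Module

section auxiliary

variable {κ : Type*} [Field κ]

private lemma aux_ltseries_le_finrank {V : Type*} [AddCommGroup V] [Module κ V]
    [FiniteDimensional κ V] (p : LTSeries (Submodule κ V)) :
    p.length ≤ finrank κ V := by
  have hm : ∀ i : Fin (p.length + 1), (i : ℕ) ≤ finrank κ (p i) := by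
    intro i
    induction i using Fin.induction with
    | zero => simp
    | succ i ih =>
      have h1 : finrank κ (p i.castSucc) < finrank κ (p i.succ) :=
        Submodule.finrank_lt_finrank_of_lt (p.strictMono (Fin.castSucc_lt_succ (i := i)))
      have := ih
      simp only [Fin.coe_castSucc] at this
      simp only [Fin.val_succ]
      omega
  have := hm (Fin.last _)
  simp only [Fin.val_last] at this
  exact this.trans (Submodule.finrank_le _)

private lemma aux_ltseries_le_finrank' (A : Type*) [CommRing A] [Algebra κ A]
    [FiniteDimensional κ A] (p : LTSeries (Submodule A A)) : p.length ≤ finrank κ A := by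
  have hsm : StrictMono (fun I : Submodule A A => I.restrictScalars κ) := by
    intro I J h
    refine lt_of_le_of_ne (fun x hx => h.le hx) (fun e => h.ne ?_)
    ext x
    exact SetLike.ext_iff.mp e x
  simpa using aux_ltseries_le_finrank (p.map _ hsm)

private lemma aux_length_eq_of_orderIso {α β : Type*} [Preorder α] [Preorder β] (e : α ≃o β) :
    (⨆ p : LTSeries α, (p.length : ℕ∞)) = ⨆ p : LTSeries β, (p.length : ℕ∞) :=
  le_antisymm (iSup_le fun p => le_iSup_of_le (p.map e e.strictMono) le_rfl)
    (iSup_le fun p => le_iSup_of_le (p.map e.symm e.symm.strictMono) le_rfl)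

private lemma aux_length_eq_of_ringEquiv {A B : Type*} [CommRing A] [CommRing B] (e : A ≃+* B) :
    Module.chainLength A A = Module.chainLength B B := by
  refine aux_length_eq_of_orderIso
    ⟨⟨fun I => Ideal.comap (e.symm : B →+* A) I,
      fun I => Ideal.comap (e : A →+* B) I, fun I => ?_, fun I => ?_⟩, ?_⟩
  · ext x
    simp only [Ideal.mem_comap, RingHom.coe_coe, RingEquiv.symm_apply_apply]
  · ext x
    simp only [Ideal.mem_comap, RingHom.coe_coe, RingEquiv.apply_symm_apply]
  · intro I J
    constructor
    · intro h x hx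
      have : e.symm (e x) ∈ J := h (show e x ∈ Ideal.comap (e.symm : B →+* A) I by
        simpa [Ideal.mem_comap] using hx)
      simpa using this
    · intro h x hx
      exact h hx

private lemma aux_step (A : Type*) [CommRing A] [Algebra κ A] [FiniteDimensional κ A]
    (p : LTSeries (Submodule A A)) (i : Fin p.length)
    (cov : p i.castSucc ⋖ p i.succ)
    (𝔪 : Ideal A) (huniq : ∀ I : Ideal A, I.IsMaximal → I = 𝔪) :
    finrank κ (p i.succ) = finrank κ (p i.castSucc) + finrank κ (A ⧸ 𝔪) := by
  set X := p i.succ with hX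
  set Y := p i.castSucc with hY
  have hle : Y ≤ X := (p.strictMono (Fin.castSucc_lt_succ (i := i))).le
  set W : Submodule A X := Submodule.comap X.subtype Y with hW
  have simple : IsSimpleModule A (X ⧸ W) := (covBy_iff_quot_is_simple hle).mp cov
  obtain ⟨I, Imax, ⟨f⟩⟩ := isSimpleModule_iff_quot_maximal.mp simple
  rw [huniq I Imax] at f
  have finX : FiniteDimensional κ X :=
    Module.Finite.equiv ((Submodule.restrictScalarsEquiv κ A A X).restrictScalars κ)
  have h1 := Submodule.finrank_quotient_add_finrank (W.restrictScalars κ)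
  have e1 : ((X : Type _) ⧸ W.restrictScalars κ) ≃ₗ[κ] ((X : Type _) ⧸ W) :=
    Submodule.Quotient.restrictScalarsEquiv κ W
  have e2 : ((X : Type _) ⧸ W) ≃ₗ[κ] (A ⧸ 𝔪) := f.restrictScalars κ
  have e3 : (W.restrictScalars κ : Type _) ≃ₗ[κ] Y := by
    have e4 : (W : Type _) ≃ₗ[A] Y := Submodule.comapSubtypeEquivOfLe hle
    exact ((Submodule.restrictScalarsEquiv κ A X W).restrictScalars κ).trans (e4.restrictScalars κ)
  rw [e1.finrank_eq, e2.finrank_eq, e3.finrank_eq] at h1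
  omega

private lemma aux_local (A : Type*) [CommRing A] [Algebra κ A] [FiniteDimensional κ A]
    (𝔪 : Ideal A) (huniq : ∀ I : Ideal A, I.IsMaximal → I = 𝔪) :
    Module.chainLength A A < ⊤ ∧
      finrank κ A = (Module.chainLength A A).toNat * finrank κ (A ⧸ 𝔪) := by
  classical
  set S : Set ℕ := Set.range (fun p : LTSeries (Submodule A A) => p.length) with hS
  have hSne : S.Nonempty := ⟨0, RelSeries.singleton _ ⊥, rfl⟩
  have hSbdd : BddAbove S :=
    ⟨finrank κ A, by rintro _ ⟨p, rfl⟩; exact aux_ltseries_le_finrank' A p⟩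
  obtain ⟨p, hp⟩ : ∃ p : LTSeries (Submodule A A), p.length = sSup S := Nat.sSup_mem hSne hSbdd
  have hmaxlen : ∀ q : LTSeries (Submodule A A), q.length ≤ p.length := by
    intro q; rw [hp]; exact le_csSup hSbdd ⟨q, rfl⟩
  have hlen : Module.chainLength A A = (p.length : ℕ∞) := by
    refine le_antisymm (iSup_le fun q => ?_) (le_iSup_of_le p le_rfl)
    exact_mod_cast hmaxlen q
  have hhead : p.head = ⊥ := by
    by_contra h
    have := hmaxlen (p.cons ⊥ (bot_lt_iff_ne_bot.mpr (Ne.symm (fun e => h e.symm))))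
    exact absurd this (by show ¬ (0 + p.length + 1 ≤ p.length); omega)
  have hlast : p.last = ⊤ := by
    by_contra h
    have := hmaxlen (p.snoc ⊤ (lt_top_iff_ne_top.mpr h))
    exact absurd this (by show ¬ (p.length + 0 + 1 ≤ p.length); omega)
  have cov : ∀ i : Fin p.length, p i.castSucc ⋖ p i.succ := by
    intro i
    refine ⟨p.strictMono (Fin.castSucc_lt_succ (i := i)), fun c hc1 hc2 => ?_⟩
    have := hmaxlen (p.insertNth i c hc1 hc2)
    simp [RelSeries.insertNth] at this
  have key : ∀ i : Fin (p.length + 1), finrank κ (p i) = (i : ℕ) * finrank κ (A ⧸ 𝔪) := by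
    intro i
    induction i using Fin.induction with
    | zero =>
      have : p 0 = ⊥ := hhead
      rw [this]
      simp [finrank_zero_of_subsingleton]
    | succ i ih =>
      rw [aux_step A p i (cov i) 𝔪 huniq, ih]
      simp only [Fin.coe_castSucc, Fin.val_succ]
      ring
  have hfin : finrank κ A = p.length * finrank κ (A ⧸ 𝔪) := by
    have := key (Fin.last _)
    have htop : p (Fin.last _) = ⊤ := hlast
    rw [htop] at this
    rwa [((Submodule.topEquiv (R := A) (M := A)).restrictScalars κ).finrank_eq] at this
  refine ⟨?_, ?_⟩
  · rw [hlen]; exact_mod_cast lt_top_iff_ne_top.mpr (by simp)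
  · rw [hlen, hfin]; simp

private lemma aux_inf_eq_prod {R : Type*} [CommRing R] {ι : Type*} [DecidableEq ι]
    (s : Finset ι) (f : ι → Ideal R)
    (h : ∀ i ∈ s, ∀ j ∈ s, i ≠ j → IsCoprime (f i) (f j)) :
    s.inf f = ∏ i ∈ s, f i := by
  induction s using Finset.induction with
  | empty => simp
  | @insert a s ha ih =>
    rw [Finset.inf_insert, Finset.prod_insert ha,
      ih (fun i hi j hj hij => h i (Finset.mem_insert_of_mem hi) j
        (Finset.mem_insert_of_mem hj) hij)]
    exact Ideal.inf_eq_mul_of_isCoprime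
      (IsCoprime.prod_right fun j hj => h a (Finset.mem_insert_self a s) j
        (Finset.mem_insert_of_mem hj) (fun e => ha (e ▸ hj)))

end auxiliary

/-- For a finite-dimensional commutative algebra `C` over a field `κ`: `C` has finitely many
maximal ideals, each localization `C_𝔪` has finite length over itself, each residue field
`C/𝔪` is finite-dimensional over `κ`, and
`finrank_κ C = Σ_𝔪 length_{C_𝔪} (C_𝔪) * finrank_κ (C/𝔪)`. -/
theorem finrank_eq_sum_length_mul_finrank_residue
    (κ : Type*) [Field κ] (C : Type*) [CommRing C] [Algebra κ C] [FiniteDimensional κ C] :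
    Finite (MaximalSpectrum C) ∧
    (∀ 𝔪 : MaximalSpectrum C,
      Module.chainLength (Localization.AtPrime 𝔪.asIdeal) (Localization.AtPrime 𝔪.asIdeal) < ⊤ ∧
      FiniteDimensional κ (C ⧸ 𝔪.asIdeal)) ∧
    Module.finrank κ C =
      ∑ᶠ 𝔪 : MaximalSpectrum C,
        (Module.chainLength (Localization.AtPrime 𝔪.asIdeal)
            (Localization.AtPrime 𝔪.asIdeal)).toNat *
          Module.finrank κ (C ⧸ 𝔪.asIdeal) := by
  classical
  rcases subsingleton_or_nontrivial C with hC | hC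
  · have hempty : IsEmpty (MaximalSpectrum C) :=
      ⟨fun 𝔪 => 𝔪.isMaximal.ne_top (Subsingleton.elim _ _)⟩
    refine ⟨Finite.of_subsingleton, fun 𝔪 => hempty.elim 𝔪, ?_⟩
    rw [finsum_of_isEmpty]
    exact finrank_zero_of_subsingleton
  have hart : IsArtinianRing C := isArtinian_of_tower κ inferInstance
  -- finiteness of the maximal spectrum
  have hfin : Finite (MaximalSpectrum C) := by
    have : Finite {I : Ideal C | I.IsMaximal} := (IsArtinianRing.setOfPred_isMaximal_finite C).to_subtype
    exact Finite.of_injective (fun 𝔪 => (⟨𝔪.asIdeal, 𝔪.isMaximal⟩ : {I : Ideal C | I.IsMaximal}))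
      (fun 𝔪 𝔫 h => MaximalSpectrum.ext (congrArg Subtype.val h))
  have : Fintype (MaximalSpectrum C) := Fintype.ofFinite _
  -- a power of the Jacobson radical vanishes
  obtain ⟨n, hn0, hJn⟩ : ∃ n : ℕ, n ≠ 0 ∧ (Ideal.jacobson (⊥ : Ideal C)) ^ n = ⊥ := by
    obtain ⟨k, hk⟩ := IsArtinianRing.isNilpotent_jacobson_bot (R := C)
    refine ⟨k, ?_, hk⟩
    rintro rfl
    rw [pow_zero, Ideal.one_eq_top] at hk
    have h1 : (1 : C) ∈ (⊥ : Ideal C) := by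
      have : ((⊤ : Ideal C) : Set C) = ((0 : Ideal C) : Set C) := congrArg _ hk
      have h2 : (1 : C) ∈ ((0 : Ideal C) : Set C) := this ▸ Set.mem_univ 1
      simp at h2
    rw [Ideal.mem_bot] at h1
    exact one_ne_zero h1
  -- the family of powers of maximal ideals
  set f : MaximalSpectrum C → Ideal C := fun 𝔪 => 𝔪.asIdeal ^ n with hf
  have hco : ∀ 𝔪 𝔫 : MaximalSpectrum C, 𝔪 ≠ 𝔫 → IsCoprime (f 𝔪) (f 𝔫) := by
    intro 𝔪 𝔫 hne
    have hne' : 𝔪.asIdeal ≠ 𝔫.asIdeal := fun e => hne (MaximalSpectrum.ext e)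
    exact (Ideal.isCoprime_iff_sup_eq.mpr (𝔪.isMaximal.coprime_of_ne 𝔫.isMaximal hne')).pow
  -- the infimum of the family is zero
  have hProdBot : (∏ 𝔪 : MaximalSpectrum C, f 𝔪) = ⊥ := by
    have h1 : (∏ 𝔪 : MaximalSpectrum C, f 𝔪) = (∏ 𝔪 : MaximalSpectrum C, 𝔪.asIdeal) ^ n := by
      rw [hf, Finset.prod_pow]
    have h2 : (∏ 𝔪 : MaximalSpectrum C, 𝔪.asIdeal) ≤ Ideal.jacobson (⊥ : Ideal C) := by
      refine le_sInf ?_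
      rintro J ⟨-, hJmax⟩
      exact (Ideal.prod_le_inf).trans (Finset.inf_le (Finset.mem_univ (⟨J, hJmax⟩ : MaximalSpectrum C)))
    refine le_bot_iff.mp ?_
    calc (∏ 𝔪 : MaximalSpectrum C, f 𝔪)
        = (∏ 𝔪 : MaximalSpectrum C, 𝔪.asIdeal) ^ n := h1
      _ ≤ (Ideal.jacobson (⊥ : Ideal C)) ^ n := Ideal.pow_right_mono h2 n
      _ = ⊥ := hJn
  have hInfBot : (Finset.univ.inf f : Ideal C) = ⊥ := by
    rw [aux_inf_eq_prod Finset.univ f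
      (fun i _ j _ hij => hco i j hij), hProdBot]
  -- the kernel of the localization map is `𝔪 ^ n`
  have huniq : ∀ 𝔪 : MaximalSpectrum C, ∀ I : Ideal (C ⧸ f 𝔪), I.IsMaximal →
      I = (𝔪.asIdeal).map (Ideal.Quotient.mk (f 𝔪)) := by
    intro 𝔪 I hI
    have hcom : (I.comap (Ideal.Quotient.mk (f 𝔪))).IsMaximal :=
      Ideal.comap_isMaximal_of_surjective _ Ideal.Quotient.mk_surjective
    have hsub : f 𝔪 ≤ I.comap (Ideal.Quotient.mk (f 𝔪)) := by
      intro x hx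
      simp only [Ideal.mem_comap, Ideal.Quotient.eq_zero_iff_mem.mpr hx]
      exact I.zero_mem
    have hsub' : 𝔪.asIdeal ≤ I.comap (Ideal.Quotient.mk (f 𝔪)) :=
      Ideal.IsPrime.le_of_pow_le (hP := hcom.isPrime) hsub
    have heq : I.comap (Ideal.Quotient.mk (f 𝔪)) = 𝔪.asIdeal :=
      ((𝔪.isMaximal.eq_of_le hcom.ne_top hsub')).symm
    rw [← Ideal.map_comap_of_surjective _ Ideal.Quotient.mk_surjective I, heq]
  have hker : ∀ 𝔪 : MaximalSpectrum C,
      RingHom.ker (algebraMap C (Localization.AtPrime 𝔪.asIdeal)) = f 𝔪 := by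
    intro 𝔪
    -- units in the quotient
    have hunit : ∀ s : C, s ∉ 𝔪.asIdeal → IsUnit (Ideal.Quotient.mk (f 𝔪) s) := by
      intro s hs
      by_contra hnu
      obtain ⟨M, hM, hsM⟩ := Ideal.exists_le_maximal (Ideal.span {Ideal.Quotient.mk (f 𝔪) s})
        (by simpa [Ideal.span_singleton_eq_top] using hnu)
      have hsM' : Ideal.Quotient.mk (f 𝔪) s ∈ M := hsM (Ideal.mem_span_singleton_self _)
      rw [huniq 𝔪 M hM] at hsM'
      have : s ∈ (𝔪.asIdeal.map (Ideal.Quotient.mk (f 𝔪))).comap (Ideal.Quotient.mk (f 𝔪)) :=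
        hsM'
      rw [Ideal.comap_map_of_surjective _ Ideal.Quotient.mk_surjective,
        ← RingHom.ker_eq_comap_bot, Ideal.mk_ker] at this
      have hle : f 𝔪 ≤ 𝔪.asIdeal := Ideal.pow_le_self hn0
      rw [sup_eq_left.mpr hle] at this
      exact hs this
    apply le_antisymm
    · -- ker ⊆ 𝔪 ^ n
      intro x hx
      obtain ⟨m, hm⟩ := (IsLocalization.map_eq_zero_iff 𝔪.asIdeal.primeCompl _ x).mp hx
      have h0 : Ideal.Quotient.mk (f 𝔪) (↑m * x) = 0 := by
        rw [hm]; exact map_zero _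
      rw [map_mul] at h0
      have hmu := hunit (↑m) m.2
      have hx0 : Ideal.Quotient.mk (f 𝔪) x = 0 := by
        obtain ⟨u, hu⟩ := hmu
        calc Ideal.Quotient.mk (f 𝔪) x
            = ↑u⁻¹ * (↑u * Ideal.Quotient.mk (f 𝔪) x) := by
              rw [← mul_assoc]
              simp
          _ = 0 := by rw [hu, h0, mul_zero]
      exact Ideal.Quotient.eq_zero_iff_mem.mp hx0
    · -- 𝔪 ^ n ⊆ ker
      intro x hx
      -- find `s ∉ 𝔪` belonging to all other `𝔪' ^ n`
      set K : Ideal C := (Finset.univ.erase 𝔪).inf f with hK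
      have hKnle : ¬ K ≤ 𝔪.asIdeal := by
        intro hle
        obtain ⟨𝔫, h𝔫mem, h𝔫le⟩ := (Ideal.IsPrime.inf_le' 𝔪.isMaximal.isPrime).mp hle
        have : 𝔫.asIdeal ≤ 𝔪.asIdeal := Ideal.IsPrime.le_of_pow_le h𝔫le
        have : 𝔫 = 𝔪 := MaximalSpectrum.ext (𝔫.isMaximal.eq_of_le 𝔪.isMaximal.ne_top this)
        exact (Finset.mem_erase.mp h𝔫mem).1 this
      obtain ⟨s, hsK, hs𝔪⟩ := SetLike.not_le_iff_exists.mp hKnle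
      refine (IsLocalization.map_eq_zero_iff 𝔪.asIdeal.primeCompl _ x).mpr
        ⟨⟨s, hs𝔪⟩, ?_⟩
      have : s * x ∈ Finset.univ.inf f := by
        refine Submodule.mem_finsetInf.mpr fun 𝔫 _ => ?_
        by_cases h : 𝔫 = 𝔪
        · subst h
          exact Ideal.mul_mem_left _ s hx
        · have hsmem : s ∈ f 𝔫 :=
            Submodule.mem_finsetInf.mp hsK 𝔫 (Finset.mem_erase.mpr ⟨h, Finset.mem_univ 𝔫⟩)
          exact Ideal.mul_mem_right x _ hsmem
      rw [hInfBot] at this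
      simpa using this
  -- the localization is isomorphic to the quotient `C ⧸ 𝔪 ^ n`
  have eloc : ∀ 𝔪 : MaximalSpectrum C,
      (C ⧸ f 𝔪) ≃+* Localization.AtPrime 𝔪.asIdeal := fun 𝔪 =>
    (Ideal.quotEquivOfEq (hker 𝔪).symm).trans
      (RingHom.quotientKerEquivOfSurjective (f := algebraMap C (Localization.AtPrime 𝔪.asIdeal))
        (IsArtinianRing.localization_surjective 𝔪.asIdeal.primeCompl _))
  have hlenEq : ∀ 𝔪 : MaximalSpectrum C,
      Module.chainLength (Localization.AtPrime 𝔪.asIdeal) (Localization.AtPrime 𝔪.asIdeal) =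
        Module.chainLength (C ⧸ f 𝔪) (C ⧸ f 𝔪) := fun 𝔪 =>
    aux_length_eq_of_ringEquiv (eloc 𝔪).symm
  have haux := fun 𝔪 : MaximalSpectrum C =>
    aux_local (κ := κ) (C ⧸ f 𝔪) ((𝔪.asIdeal).map (Ideal.Quotient.mk (f 𝔪))) (huniq 𝔪)
  have hres : ∀ 𝔪 : MaximalSpectrum C,
      finrank κ ((C ⧸ f 𝔪) ⧸ (𝔪.asIdeal).map (Ideal.Quotient.mk (f 𝔪))) =
        finrank κ (C ⧸ 𝔪.asIdeal) := fun 𝔪 =>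
    (DoubleQuot.quotQuotEquivQuotOfLEₐ κ
      (Ideal.pow_le_self (I := 𝔪.asIdeal) hn0)).toLinearEquiv.finrank_eq
  refine ⟨hfin, fun 𝔪 => ⟨by rw [hlenEq 𝔪]; exact (haux 𝔪).1, inferInstance⟩, ?_⟩
  -- the dimension of `C` is the sum of the dimensions of the quotients
  have hsum : finrank κ C = ∑ 𝔪 : MaximalSpectrum C, finrank κ (C ⧸ f 𝔪) := by
    set Φ : C →ₗ[κ] ∀ 𝔪 : MaximalSpectrum C, C ⧸ f 𝔪 :=
      LinearMap.pi (fun 𝔪 => (Ideal.Quotient.mkₐ κ (f 𝔪)).toLinearMap) with hΦ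
    have hinj : Function.Injective Φ := by
      rw [← LinearMap.ker_eq_bot]
      refine (Submodule.eq_bot_iff _).mpr fun x hx => ?_
      have hx' : ∀ 𝔪 : MaximalSpectrum C, x ∈ f 𝔪 := by
        intro 𝔪
        have := congrFun (LinearMap.mem_ker.mp hx) 𝔪
        exact Ideal.Quotient.eq_zero_iff_mem.mp this
      have : x ∈ Finset.univ.inf f :=
        Submodule.mem_finsetInf.mpr fun 𝔪 _ => hx' 𝔪
      rw [hInfBot] at this
      simpa using this
    have hsurj : Function.Surjective Φ := by
      intro y
      obtain ⟨r, hr⟩ := Ideal.pi_quotient_surjective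
        (I := fun 𝔪 : MaximalSpectrum C => f 𝔪) (fun i j hij => hco i j hij) y
      exact ⟨r, funext fun 𝔪 => hr 𝔪⟩
    have e := LinearEquiv.ofBijective Φ ⟨hinj, hsurj⟩
    rw [e.finrank_eq, Module.finrank_pi_fintype]
  rw [finsum_eq_sum_of_fintype, hsum]
  refine Finset.sum_congr rfl fun 𝔪 _ => ?_
  rw [hlenEq 𝔪, (haux 𝔪).2, hres 𝔪]
end
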